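/- Let α > β > γ > 0 be reals and let f₁,g₁,h₁,f₂,g₂,h₂ : ℤ → ℝ satisfy, for every m ∈ ℤ, the discrete functional equations f₁(m)f₁(m+1) + g₁(m)g₁(m+1) = α−β, f₁(m)f₁(m+1) + h₁(m)h₁(m+1) = α−γ, f₂(m)f₂(m+1) − g₂(m)g₂(m+1) = α−β, f₂(m)f₂(m+1) + h₂(m)h₂(m+1) = α−γ. Define r : ℤ×ℤ → ℝ³ by r(m₁,m₂) = (√(α/((α−β)(α−γ)))·f₁(m₁)f₂(m₂), √(β/((α−β)(β−γ)))·g₁(m₁)g₂(m₂), √(γ/((α−γ)(β−γ)))·h₁(m₁)h₂(m₂)). Then for every (m₁,m₂) ∈ ℤ² the four points r(m₁−1,m₂−1), r(m₁+1,m₂−1), r(m₁+1,m₂+1), r(m₁−1,m₂+1) are coplanar (they lie in a common affine plane of ℝ³); i.e. all elementary quadrilaterals of the binet r are planar. -/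

import Mathlib

open Real

noncomputable def pt (x y z : ℝ) : EuclideanSpace ℝ (Fin 3) :=
  (WithLp.equiv 2 (Fin 3 → ℝ)).symm ![x, y, z]

private lemma cancel_aux {x y z : ℝ} (hz : z ≠ 0) (h : z * (x - y) = 0) : x = y := by
  rcases mul_eq_zero.mp h with h' | h'
  · exact absurd h' hz
  · exact sub_eq_zero.mp h'

lemma binet_det_key (Bp Gp : ℝ) (hB : Bp ≠ 0) (hG : Gp ≠ 0) (hBG : Bp ≠ Gp)
    (am a0 ap bm b0 bp cm c0 cp pm p0 pp qm q0 qp sm s0 sp : ℝ)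
    (e1m : am * a0 + bm * b0 = Bp) (e1p : a0 * ap + b0 * bp = Bp)
    (e2m : am * a0 + cm * c0 = Gp) (e2p : a0 * ap + c0 * cp = Gp)
    (e3m : pm * p0 - qm * q0 = Bp) (e3p : p0 * pp - q0 * qp = Bp)
    (e4m : pm * p0 + sm * s0 = Gp) (e4p : p0 * pp + s0 * sp = Gp) :
    ((ap - am) * pm) * ((bp*qp - bm*qm) * (cm*(sp - sm)) - (cp*sp - cm*sm) * (bm*(qp - qm)))
    - ((bp - bm) * qm) * ((ap*pp - am*pm) * (cm*(sp - sm)) - (cp*sp - cm*sm) * (am*(pp - pm)))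
    + ((cp - cm) * sm) * ((ap*pp - am*pm) * (bm*(qp - qm)) - (bp*qp - bm*qm) * (am*(pp - pm)))
    = 0 := by
  by_cases ha0 : a0 = 0
  · subst ha0
    have hb0 : b0 ≠ 0 := by
      intro h; rw [h] at e1m; exact hB (by linear_combination -e1m)
    have hc0 : c0 ≠ 0 := by
      intro h; rw [h] at e2m; exact hG (by linear_combination -e2m)
    have hbp : bp = bm := cancel_aux hb0 (by linear_combination e1p - e1m)
    have hcp : cp = cm := cancel_aux hc0 (by linear_combination e2p - e2m)
    subst hbp; subst hcp; ring
  by_cases hb0 : b0 = 0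
  · subst hb0
    have hc0 : c0 ≠ 0 := by
      intro h; rw [h] at e2m; exact hBG (by linear_combination e2m - e1m)
    have hap : ap = am := cancel_aux ha0 (by linear_combination e1p - e1m)
    have hcp : cp = cm := cancel_aux hc0 (by linear_combination e2p - e2m - e1p + e1m)
    subst hap; subst hcp; ring
  by_cases hc0 : c0 = 0
  · subst hc0
    have hap : ap = am := cancel_aux ha0 (by linear_combination e2p - e2m)
    have hbp : bp = bm := cancel_aux hb0 (by linear_combination e1p - e1m - e2p + e2m)
    subst hap; subst hbp; ring
  by_cases hp0 : p0 = 0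
  · subst hp0
    have hq0 : q0 ≠ 0 := by
      intro h; rw [h] at e3m; exact hB (by linear_combination -e3m)
    have hs0 : s0 ≠ 0 := by
      intro h; rw [h] at e4m; exact hG (by linear_combination -e4m)
    have hqp : qp = qm := cancel_aux hq0 (by linear_combination e3m - e3p)
    have hsp : sp = sm := cancel_aux hs0 (by linear_combination e4p - e4m)
    subst hqp; subst hsp; ring
  by_cases hq0 : q0 = 0
  · subst hq0
    have hs0 : s0 ≠ 0 := by
      intro h; rw [h] at e4m; exact hBG (by linear_combination e4m - e3m)
    have hpp : pp = pm := cancel_aux hp0 (by linear_combination e3p - e3m)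
    have hsp : sp = sm := cancel_aux hs0 (by linear_combination e4p - e4m - e3p + e3m)
    subst hpp; subst hsp; ring
  by_cases hs0 : s0 = 0
  · subst hs0
    have hpp : pp = pm := cancel_aux hp0 (by linear_combination e4p - e4m)
    have hqp : qp = qm := cancel_aux hq0 (by linear_combination e4p - e4m - e3p + e3m)
    subst hpp; subst hqp; ring
  have hbm : bm = (Bp - am * a0) / b0 := by field_simp; linear_combination e1m
  have hbp : bp = (Bp - a0 * ap) / b0 := by field_simp; linear_combination e1p
  have hcm : cm = (Gp - am * a0) / c0 := by field_simp; linear_combination e2m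
  have hcp : cp = (Gp - a0 * ap) / c0 := by field_simp; linear_combination e2p
  have hqm : qm = (pm * p0 - Bp) / q0 := by field_simp; linear_combination -e3m
  have hqp : qp = (p0 * pp - Bp) / q0 := by field_simp; linear_combination -e3p
  have hsm : sm = (Gp - pm * p0) / s0 := by field_simp; linear_combination e4m
  have hsp : sp = (Gp - p0 * pp) / s0 := by field_simp; linear_combination e4p
  subst hbm; subst hbp; subst hcm; subst hcp; subst hqm; subst hqp; subst hsm; subst hsp
  field_simp
  ring

lemma pt_sub_equiv (a b c d e f : ℝ) :
    (WithLp.equiv 2 (Fin 3 → ℝ)) (pt a b c - pt d e f) = ![a - d, b - e, c - f] := by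
  simp only [pt, WithLp.equiv_symm_apply, WithLp.equiv_apply, WithLp.ofLp_sub, WithLp.ofLp_toLp]
  funext i
  fin_cases i <;> simp

lemma coplanar_of_det_eq_zero (p0 p1 p2 p3 : EuclideanSpace ℝ (Fin 3))
    (h : Matrix.det (Matrix.of ![(WithLp.equiv 2 (Fin 3 → ℝ)) (p1 - p0),
        (WithLp.equiv 2 (Fin 3 → ℝ)) (p2 - p0),
        (WithLp.equiv 2 (Fin 3 → ℝ)) (p3 - p0)]) = 0) :
    Coplanar ℝ ({p0, p1, p2, p3} : Set (EuclideanSpace ℝ (Fin 3))) := by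
  have hset : ({p0, p1, p2, p3} : Set (EuclideanSpace ℝ (Fin 3)))
      = Set.range ![p0, p1, p2, p3] := by
    ext x
    simp [Matrix.range_cons, Matrix.range_empty]
    tauto
  rw [Coplanar, hset]
  have hni : ¬ AffineIndependent ℝ ![p0, p1, p2, p3] := by
    intro hA
    rw [affineIndependent_iff_linearIndependent_vsub ℝ _ 0] at hA
    have hA2 := hA.comp (finSuccAboveEquiv (0 : Fin 4)) (finSuccAboveEquiv (0 : Fin 4)).injective
    have he : (fun (i : {x : Fin 4 // x ≠ 0}) =>
          (![p0, p1, p2, p3] : Fin 4 → EuclideanSpace ℝ (Fin 3)) i -ᵥ ![p0, p1, p2, p3] 0)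
            ∘ (finSuccAboveEquiv (0 : Fin 4))
        = fun (i : Fin 3) => (WithLp.equiv 2 (Fin 3 → ℝ)).symm ((Matrix.of ![(WithLp.equiv 2 (Fin 3 → ℝ)) (p1 - p0),
        (WithLp.equiv 2 (Fin 3 → ℝ)) (p2 - p0),
        (WithLp.equiv 2 (Fin 3 → ℝ)) (p3 - p0)]) i) := by
      funext i
      fin_cases i <;> rfl
    rw [he] at hA2
    have hA3 := hA2.map' (WithLp.linearEquiv 2 ℝ (Fin 3 → ℝ)).toLinearMap
      (WithLp.linearEquiv 2 ℝ (Fin 3 → ℝ)).ker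
    have := (Matrix.linearIndependent_rows_iff_isUnit (A := Matrix.of ![(WithLp.equiv 2 (Fin 3 → ℝ)) (p1 - p0),
        (WithLp.equiv 2 (Fin 3 → ℝ)) (p2 - p0),
        (WithLp.equiv 2 (Fin 3 → ℝ)) (p3 - p0)])).mp (by exact hA3)
    rw [Matrix.isUnit_iff_isUnit_det, h] at this
    exact (not_isUnit_zero : ¬ IsUnit (0:ℝ)) this
  have h2 := (finrank_vectorSpan_le_iff_not_affineIndependent ℝ ![p0, p1, p2, p3]
      (by simp : Fintype.card (Fin 4) = 2 + 2)).mpr hni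
  calc Module.rank ℝ (vectorSpan ℝ (Set.range ![p0, p1, p2, p3]))
      = (Module.finrank ℝ (vectorSpan ℝ (Set.range ![p0, p1, p2, p3])) : Cardinal) :=
        (Module.finrank_eq_rank _ _).symm
    _ ≤ 2 := by exact_mod_cast h2

theorem binet_elementary_quadrilaterals_planar
    (α β γ : ℝ) (hαβ : β < α) (hβγ : γ < β) (hγ : 0 < γ)
    (f₁ g₁ h₁ f₂ g₂ h₂ : ℤ → ℝ)
    (hfe₁ : ∀ m : ℤ, f₁ m * f₁ (m + 1) + g₁ m * g₁ (m + 1) = α - β)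
    (hfe₂ : ∀ m : ℤ, f₁ m * f₁ (m + 1) + h₁ m * h₁ (m + 1) = α - γ)
    (hfe₃ : ∀ m : ℤ, f₂ m * f₂ (m + 1) - g₂ m * g₂ (m + 1) = α - β)
    (hfe₄ : ∀ m : ℤ, f₂ m * f₂ (m + 1) + h₂ m * h₂ (m + 1) = α - γ)
    (r : ℤ → ℤ → EuclideanSpace ℝ (Fin 3))
    (hr : ∀ m₁ m₂ : ℤ, r m₁ m₂ =
      pt (Real.sqrt (α / ((α - β) * (α - γ))) * f₁ m₁ * f₂ m₂)
        (Real.sqrt (β / ((α - β) * (β - γ))) * g₁ m₁ * g₂ m₂)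
        (Real.sqrt (γ / ((α - γ) * (β - γ))) * h₁ m₁ * h₂ m₂))
    (m₁ m₂ : ℤ) :
    Coplanar ℝ ({r (m₁ - 1) (m₂ - 1), r (m₁ + 1) (m₂ - 1),
      r (m₁ + 1) (m₂ + 1), r (m₁ - 1) (m₂ + 1)} :
        Set (EuclideanSpace ℝ (Fin 3))) := by
  have hm1 : m₁ - 1 + 1 = m₁ := by ring
  have hm2 : m₂ - 1 + 1 = m₂ := by ring
  have e1m := hfe₁ (m₁ - 1); rw [hm1] at e1m
  have e1p := hfe₁ m₁
  have e2m := hfe₂ (m₁ - 1); rw [hm1] at e2m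
  have e2p := hfe₂ m₁
  have e3m := hfe₃ (m₂ - 1); rw [hm2] at e3m
  have e3p := hfe₃ m₂
  have e4m := hfe₄ (m₂ - 1); rw [hm2] at e4m
  have e4p := hfe₄ m₂
  have hB : α - β ≠ 0 := sub_ne_zero.mpr (ne_of_gt hαβ)
  have hG : α - γ ≠ 0 := sub_ne_zero.mpr (by linarith)
  have hBG : α - β ≠ α - γ := by
    intro h
    have : β = γ := by linarith
    linarith
  have key := binet_det_key (α - β) (α - γ) hB hG hBG
    (f₁ (m₁ - 1)) (f₁ m₁) (f₁ (m₁ + 1)) (g₁ (m₁ - 1)) (g₁ m₁) (g₁ (m₁ + 1))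
    (h₁ (m₁ - 1)) (h₁ m₁) (h₁ (m₁ + 1)) (f₂ (m₂ - 1)) (f₂ m₂) (f₂ (m₂ + 1))
    (g₂ (m₂ - 1)) (g₂ m₂) (g₂ (m₂ + 1)) (h₂ (m₂ - 1)) (h₂ m₂) (h₂ (m₂ + 1))
    e1m e1p e2m e2p e3m e3p e4m e4p
  rw [hr (m₁ - 1) (m₂ - 1), hr (m₁ + 1) (m₂ - 1), hr (m₁ + 1) (m₂ + 1), hr (m₁ - 1) (m₂ + 1)]
  apply coplanar_of_det_eq_zero
  rw [pt_sub_equiv, pt_sub_equiv, pt_sub_equiv]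
  simp only [Matrix.det_fin_three, Matrix.of_apply, Matrix.cons_val', Matrix.cons_val_zero,
    Matrix.cons_val_one, Matrix.head_cons, Matrix.empty_val', Matrix.cons_val_fin_one,
    Matrix.head_fin_const, Matrix.cons_val_two, Matrix.tail_cons]
  linear_combination (Real.sqrt (α / ((α - β) * (α - γ))) * Real.sqrt (β / ((α - β) * (β - γ)))
    * Real.sqrt (γ / ((α - γ) * (β - γ)))) * key
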